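/- Suppose d_11 ≤ (1−δ_1)N_1, c_a ≤ (1−δ_2)d_11 for all a ≠ 1 (with 0 < δ_1, δ_2 < 1), and all box sizes are within a factor β > 1 of each other (so N_1 ≤ β N_a). Then Γ := [log(N_1/(N_1−d_11+c_b)) + log((N_a−c_a+d_11+1)/N_a)]/log(N_1/(N_1−d_11+c_a)) satisfies Γ ≤ ((d_11−c_b)/(d_11−c_a)) · (N_1/(N_1−d_11+c_b)) · ((2N_1+N_a)/N_a), and in particular Γ ≤ (2β+1)/(δ_1 δ_2). -/

import Mathlib

set_option maxHeartbeats 1000000 in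
/-- Under `d₁₁ ≤ (1−δ₁)N₁`, `c_b ≤ cₐ ≤ (1−δ₂)d₁₁`, and `N₁ ≤ β·Nₐ`, the quantity
`Γ = [log(N₁/(N₁−d₁₁+c_b)) + log((Nₐ−cₐ+d₁₁+1)/Nₐ)]/log(N₁/(N₁−d₁₁+cₐ))` satisfies
`Γ ≤ ((d₁₁−c_b)/(d₁₁−cₐ))·(N₁/(N₁−d₁₁+c_b))·((2N₁+Nₐ)/Nₐ)` and
`Γ ≤ (2β+1)/(δ₁δ₂)`. -/
theorem stmt17 (N₁ Nₐ d₁₁ cₐ c_b : ℕ) (δ₁ δ₂ β : ℝ)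
    (hδ₁ : 0 < δ₁) (hδ₁' : δ₁ < 1) (hδ₂ : 0 < δ₂) (hδ₂' : δ₂ < 1) (hβ : 1 < β)
    (hd : 1 ≤ d₁₁) (hNa : 1 ≤ Nₐ) (hcb : c_b ≤ cₐ)
    (h1 : (d₁₁ : ℝ) ≤ (1 - δ₁) * N₁)
    (h2 : (cₐ : ℝ) ≤ (1 - δ₂) * d₁₁)
    (h3 : (N₁ : ℝ) ≤ β * Nₐ)
    (Γ : ℝ)
    (hΓ : Γ = (Real.log ((N₁ : ℝ) / ((N₁ : ℝ) - d₁₁ + c_b)) +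
        Real.log (((Nₐ : ℝ) - cₐ + d₁₁ + 1) / Nₐ)) /
        Real.log ((N₁ : ℝ) / ((N₁ : ℝ) - d₁₁ + cₐ))) :
    Γ ≤ (((d₁₁ : ℝ) - c_b) / ((d₁₁ : ℝ) - cₐ)) * ((N₁ : ℝ) / ((N₁ : ℝ) - d₁₁ + c_b)) *
        ((2 * (N₁ : ℝ) + Nₐ) / Nₐ) ∧
    Γ ≤ (2 * β + 1) / (δ₁ * δ₂) := by
  have hd0 : (1 : ℝ) ≤ (d₁₁ : ℝ) := by exact_mod_cast hd
  have ha0 : (1 : ℝ) ≤ (Nₐ : ℝ) := by exact_mod_cast hNa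
  have hbc : (c_b : ℝ) ≤ (cₐ : ℝ) := by exact_mod_cast hcb
  have hb0 : (0 : ℝ) ≤ (c_b : ℝ) := by positivity
  have hn1 : (1 : ℝ) ≤ (N₁ : ℝ) := by nlinarith
  have hdnn : (d₁₁ : ℝ) < (N₁ : ℝ) := by nlinarith
  have hcdr : (cₐ : ℝ) < (d₁₁ : ℝ) := by nlinarith
  have hcdN : cₐ < d₁₁ := by exact_mod_cast hcdr
  have hc1dr : (cₐ : ℝ) + 1 ≤ (d₁₁ : ℝ) := by
    have h : cₐ + 1 ≤ d₁₁ := hcdN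
    exact_mod_cast h
  set n : ℝ := (N₁ : ℝ) with hn
  set a : ℝ := (Nₐ : ℝ) with ha
  set d : ℝ := (d₁₁ : ℝ) with hdd
  set c : ℝ := (cₐ : ℝ) with hc
  set b : ℝ := (c_b : ℝ) with hb
  clear_value n a d c b
  have hc0 : (0 : ℝ) ≤ c := le_trans hb0 hbc
  have hdn : d < n := hdnn
  have hcd : c < d := hcdr
  have hc1d : c + 1 ≤ d := hc1dr
  have hA : (0 : ℝ) < n - d + b := by linarith
  have hB : (0 : ℝ) < n - d + c := by linarith
  have hApos : (0 : ℝ) < a := by linarith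
  have hn0 : (0 : ℝ) < n := by linarith
  -- upper bound on numerator
  have hnum1 : Real.log (n / (n - d + b)) ≤ (d - b) / (n - d + b) := by
    have h := Real.log_le_sub_one_of_pos (x := n / (n - d + b)) (by positivity)
    have : n / (n - d + b) - 1 = (d - b) / (n - d + b) := by field_simp; ring
    linarith [this ▸ h]
  have hnum2 : Real.log ((a - c + d + 1) / a) ≤ (d - c + 1) / a := by
    have h := Real.log_le_sub_one_of_pos (x := (a - c + d + 1) / a)
      (div_pos (by linarith) (by linarith))
    have : (a - c + d + 1) / a - 1 = (d - c + 1) / a := by field_simp; ring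
    linarith [this ▸ h]
  -- lower bound on denominator
  have hden : (d - c) / n ≤ Real.log (n / (n - d + c)) := by
    have h := Real.one_sub_inv_le_log_of_pos (x := n / (n - d + c))
      (div_pos (by linarith) (by linarith))
    have he : 1 - (n / (n - d + c))⁻¹ = (d - c) / n := by
      rw [inv_div]; field_simp; ring
    linarith [he ▸ h]
  have hdcpos : (0 : ℝ) < d - c := by linarith
  have hdlb : (0 : ℝ) < (d - c) / n := by positivity
  have hnumub : (0 : ℝ) ≤ (d - b) / (n - d + b) + (d - c + 1) / a := by
    have u1 : (0:ℝ) ≤ (d - b) / (n - d + b) := div_nonneg (by linarith) hA.le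
    have u2 : (0:ℝ) ≤ (d - c + 1) / a := div_nonneg (by linarith) (by linarith)
    linarith
  have hΓle : Γ ≤ ((d - b) / (n - d + b) + (d - c + 1) / a) / ((d - c) / n) := by
    rw [hΓ]
    exact div_le_div₀ hnumub (by linarith) hdlb hden
  -- key polynomial inequality : (d-c+1)*(n-d+b) ≤ 2*n*(d-b)
  have hkey : (d - c + 1) * (n - d + b) ≤ 2 * n * (d - b) := by
    calc (d - c + 1) * (n - d + b) ≤ (2 * (d - b)) * n :=
          mul_le_mul (by linarith) (by linarith) (by linarith) (by linarith)
      _ = 2 * n * (d - b) := by ring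
  have hfirst : ((d - b) / (n - d + b) + (d - c + 1) / a) / ((d - c) / n) ≤
      ((d - b) / (d - c)) * (n / (n - d + b)) * ((2 * n + a) / a) := by
    rw [div_le_iff₀ hdlb]
    have hrhs : ((d - b) / (d - c)) * (n / (n - d + b)) * ((2 * n + a) / a) * ((d - c) / n)
        = ((d - b) * (2 * n + a)) / ((n - d + b) * a) := by
      field_simp
    rw [hrhs, div_add_div _ _ (by linarith) (by linarith),
      div_le_div_iff₀ (by positivity) (by positivity)]
    ring_nf
    nlinarith [mul_le_mul_of_nonneg_left hkey hApos.le]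
  have hG1 : Γ ≤ ((d - b) / (d - c)) * (n / (n - d + b)) * ((2 * n + a) / a) :=
    hΓle.trans hfirst
  refine ⟨hG1, hG1.trans ?_⟩
  -- second bound
  have hδ2d : δ₂ * d ≤ d - c := by nlinarith
  have hδ1n : δ₁ * n ≤ n - d + b := by nlinarith
  have t1 : (d - b) / (d - c) ≤ 1 / δ₂ := by
    rw [div_le_div_iff₀ hdcpos hδ₂]
    linarith only [hδ2d, mul_nonneg hb0 hδ₂.le]
  have t2 : n / (n - d + b) ≤ 1 / δ₁ := by
    rw [div_le_div_iff₀ hA hδ₁]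
    linarith only [hδ1n]
  have t3 : (2 * n + a) / a ≤ 2 * β + 1 := by
    rw [div_le_iff₀ hApos]
    linarith only [h3]
  have h12 : (d - b) / (d - c) * (n / (n - d + b)) ≤ 1 / δ₂ * (1 / δ₁) :=
    mul_le_mul t1 t2 (by positivity) (by positivity)
  have h123 : (d - b) / (d - c) * (n / (n - d + b)) * ((2 * n + a) / a)
      ≤ 1 / δ₂ * (1 / δ₁) * (2 * β + 1) :=
    mul_le_mul h12 t3 (by positivity) (by positivity)
  calc _ ≤ 1 / δ₂ * (1 / δ₁) * (2 * β + 1) := h123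
    _ = (2 * β + 1) / (δ₁ * δ₂) := by
        field_simp
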